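/- arXiv:math/0203013 — 3 statements merged into one kernel-verified Lean document; each statement's English description precedes it below -/
import Mathlib

section
/- Let A be a finite-dimensional associative unital real (or complex) algebra, and fix α ≠ 0 in the base field. Suppose F is a linear functional such that dim Stab_F(α) is minimal in a neighbourhood of F in A* (with respect to the standard topology). Then for all x ∈ Stab_F(α) and y ∈ Stab_F(1/α), we have xy - α yx = 0. -/
open Module

/-- `Stab_F(α)` as a submodule of `A`. -/
def Stab (k A : Type*) [Field k] [Ring A] [Algebra k A]
    (F : A →ₗ[k] k) (α : k) : Submodule k A where
  carrier := {x : A | ∀ z : A, F (x * z) = α * F (z * x)}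
  add_mem' {a b} ha hb := by
    intro z
    simp [add_mul, mul_add, ha z, hb z]
  zero_mem' := by intro z; simp
  smul_mem' c x hx := by
    intro z
    simp [smul_mul_assoc, mul_smul_comm, hx z]
    ring

lemma mem_Stab {k A : Type*} [Field k] [Ring A] [Algebra k A]
    {F : A →ₗ[k] k} {α : k} {x : A} :
    x ∈ Stab k A F α ↔ ∀ z : A, F (x * z) = α * F (z * x) := Iff.rfl

lemma pi_surj' {𝕜 V : Type*} [Field 𝕜] [AddCommGroup V] [Module 𝕜 V]
    {r : ℕ} {φ : Fin r → (V →ₗ[𝕜] 𝕜)} (hφ : LinearIndependent 𝕜 φ) :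
    Function.Surjective (LinearMap.pi φ) := by
  rw [← LinearMap.range_eq_top]
  by_contra hne
  obtain ⟨ψ, hψne, hψ⟩ := Submodule.exists_dual_map_eq_bot_of_lt_top
    (lt_top_iff_ne_top.2 hne) inferInstance
  have hvan : ∀ w ∈ LinearMap.range (LinearMap.pi φ), ψ w = 0 := by
    intro w hw
    have : ψ w ∈ (LinearMap.range (LinearMap.pi φ)).map ψ := ⟨w, hw, rfl⟩
    rw [hψ] at this
    simpa using this
  have hg : (∑ i, ψ (Pi.single i 1) • φ i) = 0 := by
    apply LinearMap.ext
    intro v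
    have hw : (fun i => φ i v) = ∑ i, (φ i v) • (Pi.single i 1 : Fin r → 𝕜) := by
      funext j
      simp [Finset.sum_apply, Pi.single_apply]
    have := hvan (LinearMap.pi φ v) ⟨v, rfl⟩
    rw [show (LinearMap.pi φ) v = (fun i => (φ i) v) from rfl, hw] at this
    simp only [map_sum, map_smul] at this
    simpa [mul_comm] using this
  have hc := Fintype.linearIndependent_iff.1 hφ (fun i => ψ (Pi.single i 1)) hg
  apply hψne
  apply LinearMap.ext
  intro w
  have hw : w = ∑ i, (w i) • (Pi.single i 1 : Fin r → 𝕜) := by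
    funext j
    simp [Finset.sum_apply, Pi.single_apply]
  rw [hw]
  simp [map_sum, map_smul, hc]

def bform {𝕜 A : Type*} [CommRing 𝕜] [Ring A] [Algebra 𝕜 A] (α : 𝕜) (f : A →ₗ[𝕜] 𝕜) :
    A →ₗ[𝕜] A →ₗ[𝕜] 𝕜 :=
  LinearMap.mk₂ 𝕜 (fun u v => f (u * v) - α * f (v * u))
    (by intro m₁ m₂ n; simp [add_mul, mul_add]; ring)
    (by intro c m n; simp [smul_mul_assoc, mul_smul_comm]; ring)
    (by intro m n₁ n₂; simp [add_mul, mul_add]; ring)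
    (by intro c m n; simp [smul_mul_assoc, mul_smul_comm]; ring)

@[simp] lemma bform_apply {𝕜 A : Type*} [CommRing 𝕜] [Ring A] [Algebra 𝕜 A] (α : 𝕜)
    (f : A →ₗ[𝕜] 𝕜) (u v : A) : bform α f u v = f (u * v) - α * f (v * u) := rfl

lemma Stab_eq_ker {k A : Type*} [Field k] [Ring A] [Algebra k A]
    (F : A →ₗ[k] k) (α : k) : Stab k A F α = LinearMap.ker (bform α F) := by
  ext u
  simp only [mem_Stab, LinearMap.mem_ker]
  constructor
  · intro hu
    apply LinearMap.ext
    intro z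
    simpa [sub_eq_zero] using hu z
  · intro hu z
    have := LinearMap.congr_fun hu z
    simpa [sub_eq_zero] using this

lemma aux_rank {𝕜 V : Type*} [RCLike 𝕜] [AddCommGroup V] [Module 𝕜 V] [FiniteDimensional 𝕜 V]
    (B C : V →ₗ[𝕜] V →ₗ[𝕜] 𝕜) (x₀ y₀ : V) (hx₀ : B x₀ = 0) (hy₀ : ∀ u, B u y₀ = 0)
    (hC : C x₀ y₀ = 1) :
    ∀ᶠ ε : 𝕜 in nhds 0, ε ≠ 0 →
      finrank 𝕜 (LinearMap.ker (B + ε • C)) < finrank 𝕜 (LinearMap.ker B) := by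
  classical
  set n := finrank 𝕜 V with hn
  set r := finrank 𝕜 (LinearMap.range B) with hr
  haveI : Module.Free 𝕜 (LinearMap.range B) := Module.Free.of_divisionRing (K := 𝕜) (V := LinearMap.range B)
  let b : Basis (Fin r) 𝕜 (LinearMap.range B) := finBasis 𝕜 _
  let φ : Fin r → (V →ₗ[𝕜] 𝕜) := fun i => (b i : V →ₗ[𝕜] 𝕜)
  have hφ : LinearIndependent 𝕜 φ :=
    ((LinearMap.range B).subtype.linearIndependent_iff_of_injOn Subtype.val_injective.injOn).2 b.linearIndependent
  have hxex : ∀ i, ∃ u, B u = φ i := fun i => (b i).2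
  choose x_ hx_ using hxex
  have hsurj := pi_surj' hφ
  have hyex : ∀ j : Fin r, ∃ w, ∀ i, φ i w = if i = j then 1 else 0 := by
    intro j
    obtain ⟨w, hw⟩ := hsurj (Pi.single j 1)
    exact ⟨w, fun i => by
      have := congrFun hw i
      simpa [LinearMap.pi_apply, Pi.single_apply] using this⟩
  choose y_ hy_ using hyex
  let X : Fin (r + 1) → V := Fin.cons x₀ x_
  let Y : Fin (r + 1) → V := Fin.cons y₀ y_
  let M : 𝕜 → Matrix (Fin (r + 1)) (Fin (r + 1)) 𝕜 :=
    fun ε => Matrix.of fun i j => (B + ε • C) (X i) (Y j)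
  let N : 𝕜 → Matrix (Fin (r + 1)) (Fin (r + 1)) 𝕜 :=
    fun ε => Matrix.of fun i j => if i = 0 then C x₀ (Y j) else (B + ε • C) (X i) (Y j)
  have hMN : ∀ ε, (M ε).det = ε * (N ε).det := by
    intro ε
    have h1 : M ε = (N ε).updateRow 0 (ε • fun j => C x₀ (Y j)) := by
      ext i j
      rcases eq_or_ne i 0 with rfl | hi
      · simp [M, N, X, Matrix.updateRow_apply, hx₀]
      · simp [M, N, Matrix.updateRow_apply, hi]
    have h2 : (N ε).updateRow 0 (fun j => C x₀ (Y j)) = N ε := by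
      have : (fun j => C x₀ (Y j)) = N ε 0 := by funext j; simp [N]
      rw [this, Matrix.updateRow_eq_self]
    rw [h1, Matrix.det_updateRow_smul, h2]
  have hN0 : (N 0).det = 1 := by
    have htri : (N 0).BlockTriangular id := by
      intro i j hij
      have hi : i ≠ 0 := by
        intro h; subst h; exact absurd hij (by simpa using Fin.not_lt_zero (α := ?_) _)
      obtain ⟨i', rfl⟩ := Fin.eq_succ_of_ne_zero hi
      rcases eq_or_ne j 0 with rfl | hj
      · have h0 : (φ i') y₀ = 0 := by rw [← hx_]; exact hy₀ _
        simp [N, X, Y, Fin.succ_ne_zero, hx_, h0]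
      · obtain ⟨j', rfl⟩ := Fin.eq_succ_of_ne_zero hj
        simp only [N, Matrix.of_apply, if_neg (Fin.succ_ne_zero i'), LinearMap.add_apply,
          LinearMap.smul_apply, X, Y, Fin.cons_succ, hx_, hy_]
        have hne : i' ≠ j' := by
          intro h; subst h; exact absurd hij (lt_irrefl _)
        simp [hne]
    rw [Matrix.det_of_upperTriangular htri]
    have : ∀ i, N 0 i i = 1 := by
      intro i
      rcases eq_or_ne i 0 with rfl | hi
      · simpa [N, Y] using hC
      · obtain ⟨i', rfl⟩ := Fin.eq_succ_of_ne_zero hi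
        simp [N, X, Y, Fin.cons_succ, if_neg (Fin.succ_ne_zero i'), hx_, hy_]
    simp [this]
  have hcont : Continuous fun ε => (N ε).det := by
    apply Continuous.matrix_det
    apply continuous_matrix
    intro i j
    rcases eq_or_ne i 0 with rfl | hi
    · simp only [N, Matrix.of_apply, if_pos rfl]
      exact continuous_const
    · simp only [N, Matrix.of_apply, if_neg hi, LinearMap.add_apply, LinearMap.smul_apply,
        smul_eq_mul]
      exact continuous_const.add (continuous_id.mul continuous_const)
  have hev : ∀ᶠ ε : 𝕜 in nhds 0, (N ε).det ≠ 0 := by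
    have := hcont.continuousAt (x := (0 : 𝕜))
    exact this.eventually_ne (by rw [hN0]; exact one_ne_zero)
  filter_upwards [hev] with ε hdet hε
  set S := B + ε • C with hS
  have hMdet : (M ε).det ≠ 0 := by rw [hMN]; exact mul_ne_zero hε hdet
  let P : (Fin (r + 1) → 𝕜) →ₗ[𝕜] V := Module.piEquiv (Fin (r + 1)) 𝕜 V X
  let Q : (V →ₗ[𝕜] 𝕜) →ₗ[𝕜] (Fin (r + 1) → 𝕜) := LinearMap.pi fun j => LinearMap.applyₗ (Y j)
  let T : (Fin (r + 1) → 𝕜) →ₗ[𝕜] (Fin (r + 1) → 𝕜) := Q ∘ₗ S ∘ₗ P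
  have hT : ∀ c, T c = (M ε).transpose.mulVec c := by
    intro c
    funext j
    have hP : P c = ∑ i, c i • X i := Module.piEquiv_apply_apply _ _ _ X c
    simp only [T, LinearMap.comp_apply, hP, map_sum, map_smul, Q, LinearMap.pi_apply,
      LinearMap.sum_apply, LinearMap.smul_apply, smul_eq_mul]
    simp [LinearMap.applyₗ, LinearMap.applyₗ', Matrix.mulVec, dotProduct, M, hS, mul_comm]
    rfl
  have hTsurj : Function.Surjective T := by
    have hdet' : IsUnit ((M ε).transpose).det := by
      rw [Matrix.det_transpose]; exact isUnit_iff_ne_zero.2 hMdet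
    intro w
    refine ⟨((M ε).transpose)⁻¹.mulVec w, ?_⟩
    rw [hT, Matrix.mulVec_mulVec, Matrix.mul_nonsing_inv _ hdet', Matrix.one_mulVec]
  have hrankT : finrank 𝕜 (LinearMap.range T) = r + 1 := by
    have htop : LinearMap.range T = ⊤ := LinearMap.range_eq_top.2 hTsurj
    rw [htop, finrank_top]
    simp
  have hle : LinearMap.range T ≤ (LinearMap.range S).map Q := by
    rintro _ ⟨c, rfl⟩
    exact ⟨S (P c), ⟨P c, rfl⟩, rfl⟩
  have hrankS : r + 1 ≤ finrank 𝕜 (LinearMap.range S) := by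
    calc r + 1 = finrank 𝕜 (LinearMap.range T) := hrankT.symm
    _ ≤ finrank 𝕜 ((LinearMap.range S).map Q) := Submodule.finrank_mono hle
    _ ≤ finrank 𝕜 (LinearMap.range S) := Submodule.finrank_map_le _ _
  have hrnS := LinearMap.finrank_range_add_finrank_ker S
  have hrnB := LinearMap.finrank_range_add_finrank_ker B
  omega

/-- If `dim Stab_F(α)` (with `α ≠ 0`) is minimal among continuous functionals in a
neighbourhood of `F` in the dual of a finite-dimensional real or complex algebra, then
`x y - α • (y x) = 0` for all `x ∈ Stab_F(α)` and `y ∈ Stab_F(α⁻¹)`. -/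
theorem stmt_16 (𝕜 A : Type*) [RCLike 𝕜] [NormedRing A] [NormedAlgebra 𝕜 A]
    [FiniteDimensional 𝕜 A] (α : 𝕜) (hα : α ≠ 0) (F : A →L[𝕜] 𝕜)
    (hmin : ∀ᶠ (G : A →L[𝕜] 𝕜) in nhds F,
      finrank 𝕜 (Stab 𝕜 A (F : A →ₗ[𝕜] 𝕜) α) ≤ finrank 𝕜 (Stab 𝕜 A (G : A →ₗ[𝕜] 𝕜) α)) :
    ∀ x ∈ Stab 𝕜 A (F : A →ₗ[𝕜] 𝕜) α, ∀ y ∈ Stab 𝕜 A (F : A →ₗ[𝕜] 𝕜) α⁻¹,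
      x * y - α • (y * x) = 0 := by
  intro x hx y hy
  by_contra hne
  have hxs : ∀ z : A, F (x * z) = α * F (z * x) := hx
  have hys : ∀ z : A, F (y * z) = α⁻¹ * F (z * y) := hy
  set v := x * y - α • (y * x) with hv
  obtain ⟨g, hgnorm, hgv⟩ := exists_dual_vector 𝕜 v (norm_ne_zero_iff.2 hne)
  set Hc : A →L[𝕜] 𝕜 := (((‖v‖ : ℝ) : 𝕜))⁻¹ • g with hHc
  have hnv : ((‖v‖ : ℝ) : 𝕜) ≠ 0 := by
    simpa using norm_ne_zero_iff.2 hne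
  have hHv : Hc v = 1 := by
    simp only [hHc, ContinuousLinearMap.smul_apply, hgv, smul_eq_mul]
    exact inv_mul_cancel₀ hnv
  have hx' : bform α (F : A →ₗ[𝕜] 𝕜) x = 0 := by
    apply LinearMap.ext
    intro z
    simpa [sub_eq_zero] using hxs z
  have hy' : ∀ u, bform α (F : A →ₗ[𝕜] 𝕜) u y = 0 := by
    intro u
    simp only [bform_apply, ContinuousLinearMap.coe_coe]
    rw [hys u]
    field_simp
    ring
  have hC : bform α (Hc : A →ₗ[𝕜] 𝕜) x y = 1 := by
    have h1 : Hc (x * y) - α * Hc (y * x) = Hc v := by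
      rw [hv, map_sub, map_smul, smul_eq_mul]
    simp only [bform_apply, ContinuousLinearMap.coe_coe]
    rw [h1, hHv]
  have key := aux_rank (bform α (F : A →ₗ[𝕜] 𝕜)) (bform α (Hc : A →ₗ[𝕜] 𝕜)) x y hx' hy' hC
  have hφcont : Continuous fun ε : 𝕜 => F + ε • Hc :=
    continuous_const.add (continuous_id.smul continuous_const)
  have h2 : ∀ᶠ ε : 𝕜 in nhds 0,
      finrank 𝕜 (Stab 𝕜 A (F : A →ₗ[𝕜] 𝕜) α) ≤
        finrank 𝕜 (Stab 𝕜 A ((F + ε • Hc : A →L[𝕜] 𝕜) : A →ₗ[𝕜] 𝕜) α) := by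
    have ht : Filter.Tendsto (fun ε : 𝕜 => F + ε • Hc) (nhds 0) (nhds F) := by
      have h00 : F + (0 : 𝕜) • Hc = F := by ext a; simp
      have := hφcont.tendsto 0
      rwa [h00] at this
    exact ht.eventually hmin
  have hbl : ∀ ε : 𝕜, bform α ((F + ε • Hc : A →L[𝕜] 𝕜) : A →ₗ[𝕜] 𝕜) =
      bform α (F : A →ₗ[𝕜] 𝕜) + ε • bform α (Hc : A →ₗ[𝕜] 𝕜) := by
    intro ε
    apply LinearMap.ext
    intro u
    apply LinearMap.ext
    intro w
    simp [bform_apply]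
    ring
  have h3 := (key.and h2).filter_mono (nhdsWithin_le_nhds (s := {(0 : 𝕜)}ᶜ))
  have h4 : ∀ᶠ ε in nhdsWithin (0 : 𝕜) {(0 : 𝕜)}ᶜ, ε ∈ ({(0 : 𝕜)}ᶜ : Set 𝕜) :=
    eventually_mem_nhdsWithin
  obtain ⟨ε, hmem, hkey, hcmp⟩ := (h4.and h3).exists
  have hεne : ε ≠ 0 := hmem
  have e1 := hkey hεne
  rw [Stab_eq_ker, Stab_eq_ker, hbl ε] at hcmp
  omega
end

section
/- Let A be a finite-dimensional associative unital algebra over ℝ or ℂ, and let F be a linear functional such that dim Stab_F(1) is minimal among functionals in a neighbourhood of F in A*. Then Stab_F(1) is a commutative subalgebra of A. -/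
open Module

/-- `Stab_F(1) = {x | ∀ z, F (x z) = F (z x)}` as a submodule of `A`. -/
def Stab1 (k A : Type*) [Field k] [Ring A] [Algebra k A]
    (F : A →ₗ[k] k) : Submodule k A where
  carrier := {x : A | ∀ z : A, F (x * z) = F (z * x)}
  add_mem' {a b} ha hb := by
    intro z
    simp [add_mul, mul_add, ha z, hb z]
  zero_mem' := by intro z; simp
  smul_mem' c x hx := by
    intro z
    simp [smul_mul_assoc, mul_smul_comm, hx z]

noncomputable section DufloVergne

open LinearMap Polynomial

variable {𝕜 : Type*} [RCLike 𝕜]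

set_option maxHeartbeats 1000000 in
/-- Core linear algebra lemma (Duflo–Vergne perturbation argument): if `B` has locally
maximal rank along the pencil `B + t • C` with `B, C` skew, then `C` vanishes on
`ker B × ker B`. -/
lemma dv_core {V : Type*} [AddCommGroup V] [Module 𝕜 V] [FiniteDimensional 𝕜 V]
    (B C : V →ₗ[𝕜] V →ₗ[𝕜] 𝕜)
    (hB : ∀ u v, B u v = - B v u) (hC : ∀ u v, C u v = - C v u)
    (δ : ℝ) (hδ : 0 < δ)
    (hrank : ∀ t : 𝕜, ‖t‖ < δ →
      finrank 𝕜 (LinearMap.range (B + t • C)) ≤ finrank 𝕜 (LinearMap.range B))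
    (x y : V) (hx : B x = 0) (hy : B y = 0) : C x y = 0 := by
  by_contra hc
  obtain ⟨W, hWc⟩ := Submodule.exists_isCompl (LinearMap.ker B)
  let w := Module.finBasis 𝕜 W
  set k := finrank 𝕜 W with hk
  let v : Fin k ⊕ Fin 2 → V := Sum.elim (fun i => (w i : V)) ![x, y]
  have hvker : ∀ i : Fin 2, B (v (Sum.inr i)) = 0 := by
    intro i; fin_cases i <;> simpa [v]
  -- matrices of B, C on the family v
  set MM : Matrix (Fin k ⊕ Fin 2) (Fin k ⊕ Fin 2) 𝕜 := fun i j => B (v i) (v j) with hMM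
  set NN : Matrix (Fin k ⊕ Fin 2) (Fin k ⊕ Fin 2) 𝕜 := fun i j => C (v i) (v j) with hNN
  -- B is nondegenerate on W
  have hMW : (Matrix.of fun i j : Fin k => B (w i : V) (w j : V)).det ≠ 0 := by
    intro h
    obtain ⟨a, ha, hav⟩ := (Matrix.exists_mulVec_eq_zero_iff).mpr h
    set u : W := ∑ j, a j • w j with hu
    have hBu : ∀ i : Fin k, B (w i : V) (u : V) = 0 := by
      intro i
      have := congrFun hav i
      simp only [Matrix.mulVec, dotProduct, Pi.zero_apply] at this
      calc B (w i : V) (u : V) = ∑ j, a j * B (w i : V) (w j : V) := by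
            simp [hu, Finset.mul_sum, mul_comm]
        _ = 0 := by rw [← this]; congr 1; ext j; simp [Matrix.of_apply]; ring
    have hBu' : B (u : V) = 0 := by
      ext z
      have hz : z ∈ (LinearMap.ker B) ⊔ W := by
        rw [codisjoint_iff.mp hWc.codisjoint]; trivial
      obtain ⟨zn, hzn, zw, hzw, rfl⟩ := Submodule.mem_sup.mp hz
      have h1 : B (u : V) zn = 0 := by
        rw [hB]; rw [LinearMap.mem_ker.mp hzn]; simp
      have h2 : B (u : V) zw = 0 := by
        obtain ⟨zw', rfl⟩ : ∃ z' : W, (z' : V) = zw := ⟨⟨zw, hzw⟩, rfl⟩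
        have hrepr := Basis.sum_repr w zw'
        rw [← hrepr]
        push_cast
        rw [map_sum]
        refine Finset.sum_eq_zero fun i _ => ?_
        rw [map_smul, hB, hBu]
        simp
      simp [map_add, h1, h2]
    have humem : (u : V) ∈ LinearMap.ker B ⊓ W := by
      refine ⟨hBu', u.2⟩
    rw [disjoint_iff.mp hWc.disjoint] at humem
    have hu0 : u = 0 := Submodule.coe_eq_zero.mp (by simpa using humem)
    apply ha
    funext j
    exact Fintype.linearIndependent_iff.mp w.linearIndependent a (by rw [← hu]; exact hu0) j
  -- the polynomial matrix and the factorization det P_X = X^2 * det R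
  set PX : Matrix (Fin k ⊕ Fin 2) (Fin k ⊕ Fin 2) 𝕜[X] :=
    fun i j => Polynomial.C (MM i j) + X * Polynomial.C (NN i j) with hPX
  set R : Matrix (Fin k ⊕ Fin 2) (Fin k ⊕ Fin 2) 𝕜[X] := fun i j =>
    Sum.elim (fun _ : Fin k => Polynomial.C (MM i j) + X * Polynomial.C (NN i j))
      (fun _ : Fin 2 => Polynomial.C (NN i j)) i with hR
  set d : Fin k ⊕ Fin 2 → 𝕜[X] := Sum.elim (fun _ => 1) (fun _ => X) with hd
  have hfact : PX = Matrix.diagonal d * R := by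
    ext i j : 1
    rcases i with i | i
    · rw [Matrix.diagonal_mul]
      simp [hPX, hR, hd, Matrix.diagonal_mul]
    · have hM0 : MM (Sum.inr i) j = 0 := by
        simp [hMM, hvker i]
      rw [Matrix.diagonal_mul]
      simp [hPX, hR, hd, Matrix.diagonal_mul, hM0]
  have hdetPX : PX.det = X ^ 2 * R.det := by
    rw [hfact, Matrix.det_mul, Matrix.det_diagonal]
    congr 1
    rw [hd, Fintype.prod_sum_type]
    simp [sq]
  -- det R evaluated at 0 is det M_W * (C x y)^2 ≠ 0
  have hevalR : (Polynomial.evalRingHom (0:𝕜)) R.det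
      = (Matrix.of fun i j : Fin k => B (w i : V) (w j : V)).det * (C x y) ^ 2 := by
    rw [RingHom.map_det, RingHom.mapMatrix_apply]
    have hEq : R.map (Polynomial.evalRingHom (0:𝕜)) =
        Matrix.fromBlocks (Matrix.of fun i j : Fin k => B (w i : V) (w j : V)) 0
          (Matrix.of fun (i : Fin 2) (j : Fin k) => NN (Sum.inr i) (Sum.inl j))
          (Matrix.of fun i j : Fin 2 => NN (Sum.inr i) (Sum.inr j)) := by
      ext i j
      rcases i with i | i <;> rcases j with j | j
      · rw [Matrix.map_apply]
        simp [hR, hMM, v]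
      · have : MM (Sum.inl i) (Sum.inr j) = 0 := by
          rw [hMM]
          show B (v (Sum.inl i)) (v (Sum.inr j)) = 0
          rw [hB, hvker j]; simp
        rw [Matrix.map_apply]
        simp [hR, this]
      · rw [Matrix.map_apply]
        simp [hR]
      · rw [Matrix.map_apply]
        simp [hR]
    rw [hEq, Matrix.det_fromBlocks_zero₁₂]
    congr 1
    rw [Matrix.det_fin_two]
    have h00 : NN (Sum.inr 0) (Sum.inr 0) = C x x := by simp [hNN, v]
    have h01 : NN (Sum.inr 0) (Sum.inr 1) = C x y := by simp [hNN, v]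
    have h10 : NN (Sum.inr 1) (Sum.inr 0) = C y x := by simp [hNN, v]
    have h11 : NN (Sum.inr 1) (Sum.inr 1) = C y y := by simp [hNN, v]
    have hxx : C x x = 0 := by
      linear_combination (hC x x) / 2
    have hyy : C y y = 0 := by
      have := hC y y
      have : C y y = 0 := by
        have h2 : C y y = - C y y := this
        linear_combination (h2) / 2
      exact this
    simp only [Matrix.of_apply, h00, h01, h10, h11, hxx, hyy, hC y x]
    ring
  have hg : R.det ≠ 0 := by
    intro h
    rw [h] at hevalR
    simp at hevalR
    rcases hevalR with h1 | h2
    · exact hMW h1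
    · exact hc h2
  have hq : PX.det ≠ 0 := by
    rw [hdetPX]
    exact mul_ne_zero (pow_ne_zero _ X_ne_zero) hg
  -- choose small t which is not a root of det PX
  have hroots : {t : 𝕜 | (PX.det).IsRoot t}.Finite := Polynomial.finite_setOf_isRoot hq
  have hTinf : (Set.range (fun n : ℕ => ((δ / (n + 2) : ℝ) : 𝕜))).Infinite := by
    apply Set.infinite_range_of_injective
    intro m n hmn
    have h1 : (δ / (m + 2) : ℝ) = (δ / (n + 2) : ℝ) := by
      exact_mod_cast RCLike.ofReal_inj.mp hmn
    have hm2 : (0:ℝ) < (m:ℝ) + 2 := by positivity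
    have hn2 : (0:ℝ) < (n:ℝ) + 2 := by positivity
    field_simp at h1
    exact_mod_cast (by linarith : (m:ℝ) = n)
  obtain ⟨t, ht⟩ := (hTinf.diff hroots).nonempty
  obtain ⟨⟨n, rfl⟩, htroot⟩ := ht
  have htnorm : ‖((δ / (n + 2) : ℝ) : 𝕜)‖ < δ := by
    rw [RCLike.norm_ofReal, abs_of_pos (by positivity)]
    rw [div_lt_iff₀ (by positivity)]
    have h0 : (0:ℝ) ≤ (n:ℝ) := Nat.cast_nonneg n
    nlinarith
  set t : 𝕜 := ((δ / (n + 2) : ℝ) : 𝕜)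
  have htne : Polynomial.eval ((δ / (n + 2) : ℝ) : 𝕜) PX.det ≠ 0 := htroot
  -- matrix at t, invertible
  set Pt : Matrix (Fin k ⊕ Fin 2) (Fin k ⊕ Fin 2) 𝕜 := fun i j => MM i j + t * NN i j with hPt
  have hPtdet : Pt.det ≠ 0 := by
    have : (Polynomial.evalRingHom t) PX.det = Pt.det := by
      rw [RingHom.map_det, RingHom.mapMatrix_apply]
      congr 1
      ext i j
      rw [Matrix.map_apply]
      simp only [hPX, hPt, Matrix.map_apply, Polynomial.coe_evalRingHom, Polynomial.eval_add,
        Polynomial.eval_mul, Polynomial.eval_C, Polynomial.eval_X]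
    rw [← this]
    exact htne
  -- independent functionals in range (B + t • C)
  set Bt : V →ₗ[𝕜] V →ₗ[𝕜] 𝕜 := B + t • C with hBt
  have happ : ∀ i j, Bt (v i) (v j) = Pt i j := by
    intro i j
    simp [hBt, hPt, hMM, hNN]
  have hli : LinearIndependent 𝕜 (fun i => Bt (v i)) := by
    rw [Fintype.linearIndependent_iff]
    intro a ha i
    by_contra hai
    have hvm : Matrix.vecMul a Pt = 0 := by
      ext j
      have h2 : (∑ i, a i • Bt (v i)) (v j) = 0 := by rw [ha]; simp
      simp only [LinearMap.sum_apply, LinearMap.smul_apply, smul_eq_mul] at h2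
      simp only [Matrix.vecMul, dotProduct, Pi.zero_apply]
      rw [← h2]
      refine Finset.sum_congr rfl fun i _ => ?_
      rw [happ]
    have : Pt.det = 0 := by
      apply Matrix.exists_vecMul_eq_zero_iff.mp
      exact ⟨a, fun h => hai (by rw [h]; rfl), hvm⟩
    exact hPtdet this
  have hcard : finrank 𝕜 (Submodule.span 𝕜 (Set.range fun i => Bt (v i))) = k + 2 := by
    rw [finrank_span_eq_card hli]
    simp
  have hle : Submodule.span 𝕜 (Set.range fun i => Bt (v i)) ≤ LinearMap.range Bt := by
    rw [Submodule.span_le]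
    rintro _ ⟨i, rfl⟩
    exact ⟨v i, rfl⟩
  have h1 : k + 2 ≤ finrank 𝕜 (LinearMap.range Bt) := by
    rw [← hcard]
    exact Submodule.finrank_mono hle
  have h2 : finrank 𝕜 (LinearMap.range Bt) ≤ finrank 𝕜 (LinearMap.range B) :=
    hrank t htnorm
  have h3 : finrank 𝕜 (LinearMap.range B) = k := by
    have e1 := LinearMap.finrank_range_add_finrank_ker B
    have e2 := Submodule.finrank_add_eq_of_isCompl hWc
    omega
  omega

variable {A : Type*} [NormedRing A] [NormedAlgebra 𝕜 A] [FiniteDimensional 𝕜 A]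

/-- The bilinear form `(u, z) ↦ G (u * z) - G (z * u)` associated to a functional. -/
def TB (G : A →ₗ[𝕜] 𝕜) : A →ₗ[𝕜] (A →ₗ[𝕜] 𝕜) :=
  LinearMap.mk₂ 𝕜 (fun u z => G (u * z) - G (z * u))
    (fun u u' z => by simp only [add_mul, mul_add, map_add]; ring)
    (fun c u z => by simp only [smul_mul_assoc, mul_smul_comm, map_smul, smul_eq_mul]; ring)
    (fun u z z' => by simp only [add_mul, mul_add, map_add]; ring)
    (fun c u z => by simp only [smul_mul_assoc, mul_smul_comm, map_smul, smul_eq_mul]; ring)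

lemma TB_apply (G : A →ₗ[𝕜] 𝕜) (u z : A) : TB G u z = G (u * z) - G (z * u) := rfl

lemma TB_skew (G : A →ₗ[𝕜] 𝕜) (u z : A) : TB G u z = - TB G z u := by
  simp only [TB_apply]; ring

lemma TB_add_smul (G H : A →ₗ[𝕜] 𝕜) (t : 𝕜) : TB (G + t • H) = TB G + t • TB H := by
  ext u z
  simp only [TB_apply, LinearMap.add_apply, LinearMap.smul_apply, smul_eq_mul]
  ring

lemma stab_eq_ker (G : A →ₗ[𝕜] 𝕜) : Stab1 𝕜 A G = LinearMap.ker (TB G) := by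
  ext u
  constructor
  · intro hu
    rw [LinearMap.mem_ker]
    ext z
    simp only [TB_apply, LinearMap.zero_apply]
    rw [hu z]
    ring
  · intro hu z
    have := congrFun (congrArg DFunLike.coe (LinearMap.mem_ker.mp hu)) z
    simp only [TB_apply, LinearMap.zero_apply] at this
    exact sub_eq_zero.mp this

lemma dv_main {F : A →L[𝕜] 𝕜}
    (hmin : ∀ᶠ (G : A →L[𝕜] 𝕜) in nhds F,
      finrank 𝕜 (Stab1 𝕜 A (F : A →ₗ[𝕜] 𝕜)) ≤ finrank 𝕜 (Stab1 𝕜 A (G : A →ₗ[𝕜] 𝕜)))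
    {x y : A} (hx : x ∈ Stab1 𝕜 A (F : A →ₗ[𝕜] 𝕜)) (hy : y ∈ Stab1 𝕜 A (F : A →ₗ[𝕜] 𝕜)) :
    x * y = y * x := by
  rw [← sub_eq_zero]
  rw [← Module.forall_dual_apply_eq_zero_iff 𝕜 (x * y - y * x)]
  intro μ
  have hxk : TB (F : A →ₗ[𝕜] 𝕜) x = 0 := by
    rw [stab_eq_ker] at hx; exact hx
  have hyk : TB (F : A →ₗ[𝕜] 𝕜) y = 0 := by
    rw [stab_eq_ker] at hy; exact hy
  obtain ⟨ε, hε, hball⟩ := Metric.eventually_nhds_iff.mp hmin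
  set μ' : A →L[𝕜] 𝕜 := LinearMap.toContinuousLinearMap μ with hμ'
  have key : TB μ x y = 0 := by
    refine dv_core (TB (F : A →ₗ[𝕜] 𝕜)) (TB μ) (TB_skew _) (TB_skew _)
      (ε / (‖μ'‖ + 1)) (by positivity) ?_ x y hxk hyk
    intro t ht
    set G : A →L[𝕜] 𝕜 := F + t • μ' with hG
    have hdist : dist G F < ε := by
      rw [dist_eq_norm, hG, add_sub_cancel_left]
      have hns : ‖t • μ'‖ = ‖t‖ * ‖μ'‖ := norm_smul t μ'
      rw [hns]
      calc ‖t‖ * ‖μ'‖ ≤ ‖t‖ * (‖μ'‖ + 1) := by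
            apply mul_le_mul_of_nonneg_left (by linarith) (norm_nonneg t)
        _ < (ε / (‖μ'‖ + 1)) * (‖μ'‖ + 1) := by
            apply mul_lt_mul_of_pos_right ht (by positivity)
        _ = ε := by field_simp
    have hGle := hball hdist
    have hcoe : (G : A →ₗ[𝕜] 𝕜) = (F : A →ₗ[𝕜] 𝕜) + t • μ := by
      rw [hG]
      ext z
      simp [hμ']
    have hTB : TB (G : A →ₗ[𝕜] 𝕜) = TB (F : A →ₗ[𝕜] 𝕜) + t • TB μ := by
      rw [hcoe, TB_add_smul]
    have e1 := LinearMap.finrank_range_add_finrank_ker (TB (F : A →ₗ[𝕜] 𝕜))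
    have e2 := LinearMap.finrank_range_add_finrank_ker (TB (G : A →ₗ[𝕜] 𝕜))
    rw [← stab_eq_ker] at e1 e2
    rw [hTB] at e2
    omega
  have := key
  rw [TB_apply] at this
  rw [map_sub]
  exact this

end DufloVergne

/-- If `dim Stab_F(1)` is minimal among continuous functionals in a neighbourhood of `F`
in the dual of a finite-dimensional real or complex algebra, then `Stab_F(1)` is a
commutative subalgebra: it contains `1`, is closed under multiplication, and its
elements commute with each other. -/
theorem stmt_17 (𝕜 A : Type*) [RCLike 𝕜] [NormedRing A] [NormedAlgebra 𝕜 A]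
    [FiniteDimensional 𝕜 A] (F : A →L[𝕜] 𝕜)
    (hmin : ∀ᶠ (G : A →L[𝕜] 𝕜) in nhds F,
      finrank 𝕜 (Stab1 𝕜 A (F : A →ₗ[𝕜] 𝕜)) ≤ finrank 𝕜 (Stab1 𝕜 A (G : A →ₗ[𝕜] 𝕜))) :
    (1 : A) ∈ Stab1 𝕜 A (F : A →ₗ[𝕜] 𝕜) ∧
    (∀ x ∈ Stab1 𝕜 A (F : A →ₗ[𝕜] 𝕜), ∀ y ∈ Stab1 𝕜 A (F : A →ₗ[𝕜] 𝕜),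
      x * y ∈ Stab1 𝕜 A (F : A →ₗ[𝕜] 𝕜) ∧ x * y = y * x) := by
  refine ⟨fun z => by rw [one_mul, mul_one], ?_⟩
  intro x hx y hy
  refine ⟨?_, dv_main hmin hx hy⟩
  intro z
  calc F ((x * y) * z) = F (x * (y * z)) := by rw [mul_assoc]
    _ = F ((y * z) * x) := hx (y * z)
    _ = F (y * (z * x)) := by rw [mul_assoc]
    _ = F ((z * x) * y) := hy (z * x)
    _ = F (z * (x * y)) := by rw [mul_assoc]
end

section
/- Let A be a finite-dimensional associative unital algebra over ℝ or ℂ, and let F be a linear functional such that dim Stab_F(0) = dim ker^L_F is minimal in a neighbourhood of F in A*. Then ker^L_F · ker^R_F = {0}, and consequently Nil_F = ker^L_F ∩ ker^R_F is a subalgebra of A with identically zero multiplication. -/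
open Module

/-- `ker^L_F = Stab_F(0) = {x | ∀ z, F (x z) = 0}` as a submodule of `A`. -/
def kerL (k A : Type*) [Field k] [Ring A] [Algebra k A]
    (F : A →ₗ[k] k) : Submodule k A where
  carrier := {x : A | ∀ z : A, F (x * z) = 0}
  add_mem' {a b} ha hb := by
    intro z
    simp [add_mul, ha z, hb z]
  zero_mem' := by intro z; simp
  smul_mem' c x hx := by
    intro z
    simp [smul_mul_assoc, hx z]

/-- `ker^R_F = Stab_F(∞) = {x | ∀ z, F (z x) = 0}` as a submodule of `A`. -/
def kerR (k A : Type*) [Field k] [Ring A] [Algebra k A]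
    (F : A →ₗ[k] k) : Submodule k A where
  carrier := {x : A | ∀ z : A, F (z * x) = 0}
  add_mem' {a b} ha hb := by
    intro z
    simp [mul_add, ha z, hb z]
  zero_mem' := by intro z; simp
  smul_mem' c x hx := by
    intro z
    simp [mul_smul_comm, hx z]

lemma exists_dual_family {k V : Type*} [Field k] [AddCommGroup V] [Module k V]
    [FiniteDimensional k V] {r : ℕ} (ψ : Fin r → Module.Dual k V)
    (hψ : LinearIndependent k ψ) :
    ∃ v : Fin r → V, ∀ i j, ψ i (v j) = if i = j then 1 else 0 := by
  set ev : V →ₗ[k] (Fin r → k) := LinearMap.pi ψ with hev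
  have hfact : ∀ i, ψ i = ev.dualMap (LinearMap.proj i) := fun i => rfl
  have hr : r ≤ finrank k (LinearMap.range ev.dualMap) := by
    have hspan : Submodule.span k (Set.range ψ) ≤ LinearMap.range ev.dualMap := by
      rw [Submodule.span_le]
      rintro _ ⟨i, rfl⟩
      exact ⟨LinearMap.proj i, (hfact i).symm⟩
    calc r = finrank k (Submodule.span k (Set.range ψ)) := by
              rw [finrank_span_eq_card hψ, Fintype.card_fin]
    _ ≤ finrank k (LinearMap.range ev.dualMap) := Submodule.finrank_mono hspan
  rw [LinearMap.finrank_range_dualMap_eq_finrank_range] at hr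
  have htop : LinearMap.range ev = ⊤ := by
    apply Submodule.eq_top_of_finrank_eq
    have := Submodule.finrank_le (LinearMap.range ev)
    simp only [finrank_fintype_fun_eq_card, Fintype.card_fin] at this ⊢
    omega
  have hsurj : Function.Surjective ev := LinearMap.range_eq_top.mp htop
  choose v hv using fun j => hsurj (Pi.single j 1)
  refine ⟨v, fun i j => ?_⟩
  have : ev (v j) i = (Pi.single j 1 : Fin r → k) i := by rw [hv j]
  simpa [ev, Pi.single_apply, eq_comm] using this

set_option maxHeartbeats 2000000

/-- If `dim ker^L_F` is minimal among continuous functionals in a neighbourhood of `F` in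
the dual of a finite-dimensional real or complex algebra, then
`ker^L_F · ker^R_F = {0}`; consequently `Nil_F = ker^L_F ∩ ker^R_F` is a subalgebra with
identically zero multiplication. -/
theorem stmt_18 (𝕜 A : Type*) [RCLike 𝕜] [NormedRing A] [NormedAlgebra 𝕜 A]
    [FiniteDimensional 𝕜 A] (F : A →L[𝕜] 𝕜)
    (hmin : ∀ᶠ (G : A →L[𝕜] 𝕜) in nhds F,
      finrank 𝕜 (kerL 𝕜 A (F : A →ₗ[𝕜] 𝕜)) ≤ finrank 𝕜 (kerL 𝕜 A (G : A →ₗ[𝕜] 𝕜))) :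
    (∀ x ∈ kerL 𝕜 A (F : A →ₗ[𝕜] 𝕜), ∀ y ∈ kerR 𝕜 A (F : A →ₗ[𝕜] 𝕜), x * y = 0) ∧
    (∀ x ∈ kerL 𝕜 A (F : A →ₗ[𝕜] 𝕜) ⊓ kerR 𝕜 A (F : A →ₗ[𝕜] 𝕜),
     ∀ y ∈ kerL 𝕜 A (F : A →ₗ[𝕜] 𝕜) ⊓ kerR 𝕜 A (F : A →ₗ[𝕜] 𝕜), x * y = 0) := by
  classical
  suffices main : ∀ x ∈ kerL 𝕜 A (F : A →ₗ[𝕜] 𝕜), ∀ y ∈ kerR 𝕜 A (F : A →ₗ[𝕜] 𝕜), x * y = 0 by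
    exact ⟨main, fun x hx y hy => main x hx.1 y hy.2⟩
  intro x hx y hy
  by_contra hxy
  have hx' : ∀ z : A, F (x * z) = 0 := hx
  have hy' : ∀ z : A, F (z * y) = 0 := hy
  -- a functional not vanishing at x*y
  obtain ⟨H, -, hHxy⟩ := exists_dual_vector 𝕜 (x * y) (norm_ne_zero_iff.mpr hxy)
  have hH : H (x * y) ≠ 0 := by
    rw [hHxy]
    simpa using hxy
  -- the bilinear map T a = F (a * ·)
  set T : A →ₗ[𝕜] Module.Dual 𝕜 A :=
    (LinearMap.llcomp 𝕜 A A 𝕜 (F : A →ₗ[𝕜] 𝕜)).comp (LinearMap.mul 𝕜 A) with hT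
  have hTapp : ∀ a z : A, T a z = F (a * z) := fun a z => rfl
  have hker : kerL 𝕜 A (F : A →ₗ[𝕜] 𝕜) = LinearMap.ker T := by
    ext a
    constructor
    · intro h
      exact LinearMap.ext fun z => h z
    · intro h z
      exact LinearMap.congr_fun (LinearMap.mem_ker.mp h) z
  set n := finrank 𝕜 A with hn
  obtain ⟨U, hU⟩ := Submodule.exists_isCompl (LinearMap.ker T)
  have hrd2 : finrank 𝕜 (LinearMap.ker T) + finrank 𝕜 U = n :=
    Submodule.finrank_add_eq_of_isCompl hU
  set r := finrank 𝕜 U with hrdef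
  let e : Basis (Fin r) 𝕜 U := Module.finBasis 𝕜 U
  let w : Fin r → A := fun i => (e i : A)
  let ψ : Fin r → Module.Dual 𝕜 A := fun i => T (w i)
  have hψ : LinearIndependent 𝕜 ψ := by
    rw [Fintype.linearIndependent_iff]
    intro g hg
    have hsum : T (∑ i, g i • w i) = 0 := by
      rw [map_sum]
      simpa [ψ] using hg
    have hmemU : (∑ i, g i • w i) ∈ U := by
      refine Submodule.sum_mem _ fun i _ => Submodule.smul_mem _ _ ?_
      exact (e i).2
    have h0 : (∑ i, g i • w i) = 0 := by
      have : (∑ i, g i • w i) ∈ LinearMap.ker T ⊓ U := ⟨hsum, hmemU⟩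
      rwa [hU.inf_eq_bot, Submodule.mem_bot] at this
    have h0' : (∑ i, g i • e i) = 0 := by
      apply Subtype.coe_injective
      simpa using h0
    intro i
    exact (Fintype.linearIndependent_iff.mp e.linearIndependent) g h0' i
  obtain ⟨v, hv⟩ := exists_dual_family ψ hψ
  have hδ : ∀ i j, F (w i * v j) = if i = j then 1 else 0 := by
    intro i j
    rw [← hTapp]
    exact hv i j
  -- the matrices
  let w' : Fin r ⊕ Unit → A := Sum.elim w (fun _ => x)
  let v' : Fin r ⊕ Unit → A := Sum.elim v (fun _ => y)
  let N : Matrix (Fin r ⊕ Unit) (Fin r ⊕ Unit) 𝕜 := Matrix.of fun i j => H (w' i * v' j)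
  let M0 : Matrix (Fin r ⊕ Unit) (Fin r ⊕ Unit) 𝕜 := Matrix.of fun i j => F (w' i * v' j)
  have hM0r : ∀ (u : Unit) j, M0 (Sum.inr u) j = 0 := fun u j => hx' (v' j)
  have hM0c : ∀ i (u : Unit), M0 i (Sum.inr u) = 0 := fun i u => hy' (w' i)
  let K0 : Matrix (Fin r ⊕ Unit) (Fin r ⊕ Unit) 𝕜 :=
    Matrix.of fun i j => Sum.elim (fun i' => M0 (Sum.inl i') j) (fun u => N (Sum.inr u) j) i
  let K1 : Matrix (Fin r ⊕ Unit) (Fin r ⊕ Unit) 𝕜 :=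
    Matrix.of fun i j => Sum.elim (fun i' => N (Sum.inl i') j) (fun _ => (0 : 𝕜)) i
  let K : 𝕜 → Matrix (Fin r ⊕ Unit) (Fin r ⊕ Unit) 𝕜 := fun t => K0 + t • K1
  have hKapp : ∀ t i j, K t i j = K0 i j + t * K1 i j := fun t i j => rfl
  have hK0inl : ∀ (i' : Fin r) j, K0 (Sum.inl i') j = M0 (Sum.inl i') j := fun _ _ => rfl
  have hK0inr : ∀ (u : Unit) j, K0 (Sum.inr u) j = N (Sum.inr u) j := fun _ _ => rfl
  have hK1inl : ∀ (i' : Fin r) j, K1 (Sum.inl i') j = N (Sum.inl i') j := fun _ _ => rfl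
  have hK1inr : ∀ (u : Unit) j, K1 (Sum.inr u) j = 0 := fun _ _ => rfl
  have hK00 : K 0 = Matrix.fromBlocks 1 0
      (Matrix.of fun (_ : Unit) j => H (x * v j)) (Matrix.of fun (_ _ : Unit) => H (x * y)) := by
    ext i j
    cases i with
    | inl i =>
      rw [hKapp, hK0inl, hK1inl, zero_mul, add_zero]
      cases j with
      | inl j =>
        show F (w i * v j) = _
        rw [hδ, Matrix.fromBlocks_apply₁₁, Matrix.one_apply]
      | inr u =>
        show F (w i * y) = _
        rw [hy' (w i), Matrix.fromBlocks_apply₁₂, Matrix.zero_apply]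
    | inr u =>
      rw [hKapp, hK0inr, hK1inr, zero_mul, add_zero]
      cases j with
      | inl j =>
        show H (x * v j) = _
        rw [Matrix.fromBlocks_apply₂₁, Matrix.of_apply]
      | inr u' =>
        show H (x * y) = _
        rw [Matrix.fromBlocks_apply₂₂, Matrix.of_apply]
  have hdetK0 : (K 0).det ≠ 0 := by
    rw [hK00, Matrix.det_fromBlocks_zero₁₂]
    simpa [Matrix.det_unique] using hH
  have hcont : Continuous fun t : 𝕜 => (K t).det :=
    Continuous.matrix_det (continuous_const.add (continuous_id.smul continuous_const))
  have hev1 : ∀ᶠ t in nhds (0 : 𝕜), (K t).det ≠ 0 :=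
    hcont.continuousAt.eventually_ne hdetK0
  have hγ : Continuous fun t : 𝕜 => F + t • H :=
    continuous_const.add (continuous_id.smul continuous_const)
  have hγ0 : (fun t : 𝕜 => F + t • H) 0 = F := by
    ext a
    simp
  have hev2 : ∀ᶠ t in nhds (0 : 𝕜),
      finrank 𝕜 (kerL 𝕜 A (F : A →ₗ[𝕜] 𝕜)) ≤
        finrank 𝕜 (kerL 𝕜 A ((F + t • H : A →L[𝕜] 𝕜) : A →ₗ[𝕜] 𝕜)) :=
    (hγ.tendsto' 0 F hγ0).eventually hmin
  have hne : ∀ᶠ t in nhdsWithin (0 : 𝕜) {(0 : 𝕜)}ᶜ, t ≠ 0 := by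
    filter_upwards [self_mem_nhdsWithin] with t ht
    exact ht
  obtain ⟨t, ⟨hdet, hmint⟩, ht0⟩ :=
    ((((hev1.and hev2)).filter_mono nhdsWithin_le_nhds).and hne).exists
  -- key injectivity
  have hGapp : ∀ i j, (F + t • H) (w' i * v' j) = M0 i j + t * N i j := by
    intro i j
    simp [M0, N, smul_eq_mul]
  have key : ∀ cc : Fin r ⊕ Unit → 𝕜,
      (∀ j, ∑ i, cc i * (F + t • H) (w' i * v' j) = 0) → cc = 0 := by
    intro cc h0
    set c' : Fin r ⊕ Unit → 𝕜 :=
      Sum.elim (fun i => cc (Sum.inl i)) (fun u => t * cc (Sum.inr u)) with hc'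
    have hvm : Matrix.vecMul c' (K t) = 0 := by
      funext j
      have h1 := h0 j
      simp only [hGapp] at h1
      rw [Fintype.sum_sum_type] at h1
      simp only [hM0r, Finset.univ_unique, Finset.sum_singleton, zero_add] at h1
      show ∑ i, c' i * K t i j = 0
      rw [Fintype.sum_sum_type]
      simp only [Finset.univ_unique, Finset.sum_singleton, hc', Sum.elim_inl, Sum.elim_inr,
        hKapp, hK0inl, hK0inr, hK1inl, hK1inr, mul_zero, add_zero]
      linear_combination h1
    have hc'0 : c' = 0 := by
      by_contra hne'
      exact hdet (Matrix.exists_vecMul_eq_zero_iff.mp ⟨c', hne', hvm⟩)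
    funext i
    cases i with
    | inl i => simpa [hc'] using congrFun hc'0 (Sum.inl i)
    | inr u =>
      have := congrFun hc'0 (Sum.inr u)
      simp only [hc', Sum.elim_inr, Pi.zero_apply] at this
      rcases mul_eq_zero.mp this with h | h
      · exact absurd h ht0
      · simpa using h
  have hexpand : ∀ (g : Fin r ⊕ Unit → 𝕜) (j : Fin r ⊕ Unit),
      (F + t • H) ((∑ i, g i • w' i) * v' j) = ∑ i, g i * (F + t • H) (w' i * v' j) := by
    intro g j
    rw [Finset.sum_mul, map_sum]
    exact Finset.sum_congr rfl fun i _ => by rw [smul_mul_assoc, map_smul, smul_eq_mul]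
  have hli : LinearIndependent 𝕜 w' := by
    rw [Fintype.linearIndependent_iff]
    intro g hg
    have h0 : ∀ j, ∑ i, g i * (F + t • H) (w' i * v' j) = 0 := by
      intro j
      rw [← hexpand, hg, zero_mul, map_zero]
    exact fun i => by simpa using congrFun (key g h0) i
  set W := Submodule.span 𝕜 (Set.range w') with hW
  have hWrank : finrank 𝕜 W = r + 1 := by
    rw [hW, finrank_span_eq_card hli]
    simp
  set KG := kerL 𝕜 A ((F + t • H : A →L[𝕜] 𝕜) : A →ₗ[𝕜] 𝕜) with hKG
  have hdisj : KG ⊓ W = ⊥ := by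
    rw [Submodule.eq_bot_iff]
    rintro a ⟨haK, haW⟩
    have haK' : ∀ z : A, (F + t • H) (a * z) = 0 := haK
    obtain ⟨cc, hcc⟩ := Submodule.mem_span_range_iff_exists_fun 𝕜 |>.mp haW
    have h0 : ∀ j, ∑ i, cc i * (F + t • H) (w' i * v' j) = 0 := by
      intro j
      rw [← hexpand, hcc]
      exact haK' (v' j)
    rw [← hcc, key cc h0]
    simp
  have hcount : finrank 𝕜 KG + (r + 1) ≤ n := by
    have h1 := Submodule.finrank_sup_add_finrank_inf_eq KG W
    rw [hdisj, hWrank] at h1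
    simp only [finrank_bot, add_zero] at h1
    calc finrank 𝕜 KG + (r + 1) = finrank 𝕜 ↥(KG ⊔ W) := h1.symm
    _ ≤ n := Submodule.finrank_le _
  have hdle : finrank 𝕜 (LinearMap.ker T) ≤ finrank 𝕜 KG := by
    rw [← hker]
    exact hmint
  omega
end
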